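/- Let 0 < γ ≤ 1 and β > 0. There exists a constant c > 0 (depending only on γ and β) such that for all real numbers b₁, b₂, z with |z| ≤ β|b₁| one has ||b₁+b₂|^γ z − |b₁|^γ z| ≤ c |b₁ b₂|^{(γ+1)/2}. -/

import Mathlib

open Real

lemma aux_add (γ : ℝ) (hγ0 : 0 ≤ γ) (hγ1 : γ ≤ 1) {a b : ℝ} (ha : 0 ≤ a) (hb : 0 ≤ b) :
    (a + b) ^ γ ≤ a ^ γ + b ^ γ := by
  have h := NNReal.rpow_add_le_add_rpow a.toNNReal b.toNNReal hγ0 hγ1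
  rw [← Real.toNNReal_add ha hb] at h
  have h2 := NNReal.coe_le_coe.2 h
  rwa [NNReal.coe_add, NNReal.coe_rpow, NNReal.coe_rpow, NNReal.coe_rpow,
    Real.coe_toNNReal _ ha, Real.coe_toNNReal _ hb,
    Real.coe_toNNReal _ (add_nonneg ha hb)] at h2

lemma aux_sub (γ : ℝ) (hγ0 : 0 ≤ γ) (hγ1 : γ ≤ 1) {x y : ℝ} (hx : 0 ≤ x) (hy : 0 ≤ y) :
    |x ^ γ - y ^ γ| ≤ |x - y| ^ γ := by
  wlog hxy : y ≤ x generalizing x y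
  · rw [abs_sub_comm, abs_sub_comm x y]; exact this hy hx (le_of_not_ge hxy)
  have h1 : x ^ γ ≤ y ^ γ + (x - y) ^ γ := by
    have := aux_add γ hγ0 hγ1 hy (sub_nonneg.2 hxy)
    simpa using this
  have h2 : y ^ γ ≤ x ^ γ := Real.rpow_le_rpow hy hxy hγ0
  rw [abs_of_nonneg (sub_nonneg.2 h2), abs_of_nonneg (sub_nonneg.2 hxy)]
  linarith

lemma aux_lip (γ : ℝ) (hγ0 : 0 < γ) (hγ1 : γ ≤ 1) {m x y : ℝ} (hm : 0 < m)
    (hmx : m ≤ x) (hmy : m ≤ y) :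
    |x ^ γ - y ^ γ| ≤ γ * m ^ (γ - 1) * |x - y| := by
  wlog hxy : y ≤ x generalizing x y
  · rw [abs_sub_comm, abs_sub_comm x y]; exact this hmy hmx (le_of_not_ge hxy)
  have hy : 0 < y := hm.trans_le hmy
  have key : x ^ γ ≤ y ^ γ * (1 + γ * ((x - y) / y)) := by
    have hxe : x = y * (1 + (x - y) / y) := by field_simp; ring
    calc x ^ γ = y ^ γ * (1 + (x - y) / y) ^ γ := by
          have hs : (0:ℝ) ≤ (x - y) / y := div_nonneg (sub_nonneg.2 hxy) hy.le
          rw [← Real.mul_rpow hy.le (by linarith), ← hxe]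
      _ ≤ y ^ γ * (1 + γ * ((x - y) / y)) := by
          have hs : (0:ℝ) ≤ (x - y) / y := div_nonneg (sub_nonneg.2 hxy) hy.le
          gcongr
          exact rpow_one_add_le_one_add_mul_self (by linarith) hγ0.le hγ1
  have heq : y ^ γ * (1 + γ * ((x - y) / y)) = y ^ γ + γ * (y ^ (γ - 1) * (x - y)) := by
    rw [Real.rpow_sub_one hy.ne']
    field_simp
  have hmle : y ^ (γ - 1) ≤ m ^ (γ - 1) :=
    Real.rpow_le_rpow_of_nonpos hm hmy (by linarith)
  have h2 : y ^ γ ≤ x ^ γ := Real.rpow_le_rpow hy.le hxy hγ0.le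
  rw [abs_of_nonneg (sub_nonneg.2 h2), abs_of_nonneg (sub_nonneg.2 hxy)]
  have h3 : x ^ γ - y ^ γ ≤ γ * (y ^ (γ - 1) * (x - y)) := by
    rw [heq] at key; linarith
  have h4 : y ^ (γ - 1) * (x - y) ≤ m ^ (γ - 1) * (x - y) :=
    mul_le_mul_of_nonneg_right hmle (sub_nonneg.2 hxy)
  calc x ^ γ - y ^ γ ≤ γ * (y ^ (γ - 1) * (x - y)) := h3
    _ ≤ γ * (m ^ (γ - 1) * (x - y)) := mul_le_mul_of_nonneg_left h4 hγ0.le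
    _ = γ * m ^ (γ - 1) * (x - y) := by ring

theorem stmt_7 (γ β : ℝ) (hγ0 : 0 < γ) (hγ1 : γ ≤ 1) (hβ : 0 < β) :
    ∃ c : ℝ, 0 < c ∧ ∀ b₁ b₂ z : ℝ, |z| ≤ β * |b₁| →
      abs (|b₁ + b₂| ^ γ * z - |b₁| ^ γ * z) ≤ c * |b₁ * b₂| ^ ((γ + 1) / 2) := by
  refine ⟨2 * β, by positivity, fun b₁ b₂ z hz => ?_⟩
  set X := |b₁ + b₂| with hX
  set Y := |b₁| with hY
  set B := |b₂| with hB
  have hX0 : 0 ≤ X := abs_nonneg _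
  have hY0 : 0 ≤ Y := abs_nonneg _
  have hB0 : 0 ≤ B := abs_nonneg _
  have hprod : |b₁ * b₂| = Y * B := abs_mul _ _
  have hLHS : abs (X ^ γ * z - Y ^ γ * z) = |X ^ γ - Y ^ γ| * |z| := by
    rw [← sub_mul, abs_mul]
  rw [hLHS, hprod]
  have hXY : |X - Y| ≤ B := by
    have := abs_abs_sub_abs_le_abs_sub (b₁ + b₂) b₁
    simpa using this
  rcases eq_or_lt_of_le hY0 with hY0' | hYpos
  · have hz0 : z = 0 := by
      have h : |z| ≤ 0 := by rw [← hY0'] at hz; linarith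
      simpa [abs_nonpos_iff] using h
    simp only [hz0, abs_zero, mul_zero]
    positivity
  rcases eq_or_lt_of_le hB0 with hB0' | hBpos
  · have hb2 : b₂ = 0 := by simpa [hB, eq_comm, abs_eq_zero] using hB0'
    simp only [hX, hY, hb2, add_zero, sub_self, abs_zero, zero_mul]
    positivity
  have hexp : (γ + 1) / 2 + (1 - γ) / 2 = 1 := by ring
  rcases le_or_gt Y (2 * B) with hcase | hcase
  · -- Y ≤ 2B
    have h1 : |X ^ γ - Y ^ γ| ≤ B ^ γ := by
      calc |X ^ γ - Y ^ γ| ≤ |X - Y| ^ γ := aux_sub γ hγ0.le hγ1 hX0 hY0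
        _ ≤ B ^ γ := Real.rpow_le_rpow (abs_nonneg _) hXY hγ0.le
    have h2 : |X ^ γ - Y ^ γ| * |z| ≤ B ^ γ * (β * Y) :=
      mul_le_mul h1 hz (abs_nonneg _) (by positivity)
    refine h2.trans ?_
    have hYsplit : Y = Y ^ ((γ + 1) / 2) * Y ^ ((1 - γ) / 2) := by
      rw [← Real.rpow_add hYpos, hexp, Real.rpow_one]
    have hY2 : Y ^ ((1 - γ) / 2) ≤ 2 * B ^ ((1 - γ) / 2) := by
      calc Y ^ ((1 - γ) / 2) ≤ (2 * B) ^ ((1 - γ) / 2) :=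
            Real.rpow_le_rpow hY0 hcase (by linarith)
        _ = 2 ^ ((1 - γ) / 2) * B ^ ((1 - γ) / 2) :=
            Real.mul_rpow (by norm_num) hB0
        _ ≤ 2 * B ^ ((1 - γ) / 2) := by
            refine mul_le_mul_of_nonneg_right ?_ (by positivity)
            calc (2:ℝ) ^ ((1 - γ) / 2) ≤ 2 ^ (1:ℝ) :=
                  Real.rpow_le_rpow_of_exponent_le one_le_two (by linarith)
              _ = 2 := Real.rpow_one 2
    have hBsplit : B ^ γ * B ^ ((1 - γ) / 2) = B ^ ((γ + 1) / 2) := by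
      rw [← Real.rpow_add hBpos]; congr 1; ring
    calc B ^ γ * (β * Y) = β * (B ^ γ * (Y ^ ((γ + 1) / 2) * Y ^ ((1 - γ) / 2))) := by
          rw [← hYsplit]; ring
      _ ≤ β * (B ^ γ * (Y ^ ((γ + 1) / 2) * (2 * B ^ ((1 - γ) / 2)))) := by
          gcongr
      _ = 2 * β * (Y ^ ((γ + 1) / 2) * (B ^ γ * B ^ ((1 - γ) / 2))) := by ring
      _ = 2 * β * (Y ^ ((γ + 1) / 2) * B ^ ((γ + 1) / 2)) := by rw [hBsplit]
      _ = 2 * β * (Y * B) ^ ((γ + 1) / 2) := by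
          rw [← Real.mul_rpow hY0 hB0]
  · -- 2B < Y
    have hBY : B ≤ Y := by linarith
    have hm : (0:ℝ) < Y / 2 := by linarith
    have hmX : Y / 2 ≤ X := by
      have h := abs_le.1 hXY
      linarith [h.2]
    have hmY : Y / 2 ≤ Y := by linarith
    have h1 : |X ^ γ - Y ^ γ| ≤ γ * (Y / 2) ^ (γ - 1) * B := by
      calc |X ^ γ - Y ^ γ| ≤ γ * (Y / 2) ^ (γ - 1) * |X - Y| :=
            aux_lip γ hγ0 hγ1 hm hmX hmY
        _ ≤ γ * (Y / 2) ^ (γ - 1) * B := by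
            refine mul_le_mul_of_nonneg_left hXY ?_
            positivity
    have h2 : |X ^ γ - Y ^ γ| * |z| ≤ γ * (Y / 2) ^ (γ - 1) * B * (β * Y) :=
      mul_le_mul h1 hz (abs_nonneg _) (by positivity)
    refine h2.trans ?_
    have hinv : (2:ℝ) ^ (γ - 1) * 2 ^ (1 - γ) = 1 := by
      rw [← Real.rpow_add (by norm_num : (0:ℝ) < 2)]
      norm_num
    have hY21 : (Y / 2) ^ (γ - 1) ≤ 2 * Y ^ (γ - 1) := by
      rw [Real.div_rpow hY0 (by norm_num)]
      rw [div_le_iff₀ (by positivity : (0:ℝ) < 2 ^ (γ - 1))]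
      · calc Y ^ (γ - 1) = Y ^ (γ - 1) * (2 ^ (γ - 1) * 2 ^ (1 - γ)) := by
              rw [hinv, mul_one]
          _ ≤ Y ^ (γ - 1) * (2 ^ (γ - 1) * 2) := by
              have h21 : (2:ℝ) ^ (1 - γ) ≤ 2 := by
                calc (2:ℝ) ^ (1 - γ) ≤ 2 ^ (1:ℝ) :=
                      Real.rpow_le_rpow_of_exponent_le one_le_two (by linarith)
                  _ = 2 := Real.rpow_one 2
              gcongr
          _ = 2 * Y ^ (γ - 1) * 2 ^ (γ - 1) := by ring
    have hBs : B = B ^ ((γ + 1) / 2) * B ^ ((1 - γ) / 2) := by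
      rw [← Real.rpow_add hBpos, hexp, Real.rpow_one]
    have hB2 : B ^ ((1 - γ) / 2) ≤ Y ^ ((1 - γ) / 2) :=
      Real.rpow_le_rpow hB0 hBY (by linarith)
    have hYcomb : Y ^ (γ - 1) * Y * Y ^ ((1 - γ) / 2) = Y ^ ((γ + 1) / 2) := by
      nth_rewrite 2 [← Real.rpow_one Y]
      rw [← Real.rpow_add hYpos, ← Real.rpow_add hYpos]
      congr 1; ring
    calc γ * (Y / 2) ^ (γ - 1) * B * (β * Y)
        ≤ 1 * (2 * Y ^ (γ - 1)) * B * (β * Y) := by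
          have hp : (0:ℝ) ≤ B * (β * Y) := by positivity
          have := mul_le_mul (mul_le_mul hγ1 hY21 (by positivity) zero_le_one)
            (le_refl (B * (β * Y))) hp (by positivity)
          calc γ * (Y / 2) ^ (γ - 1) * B * (β * Y)
              = γ * (Y / 2) ^ (γ - 1) * (B * (β * Y)) := by ring
            _ ≤ 1 * (2 * Y ^ (γ - 1)) * (B * (β * Y)) := this
            _ = 1 * (2 * Y ^ (γ - 1)) * B * (β * Y) := by ring
      _ = 2 * β * (Y ^ (γ - 1) * Y * (B ^ ((γ + 1) / 2) * B ^ ((1 - γ) / 2))) := by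
          rw [← hBs]; ring
      _ ≤ 2 * β * (Y ^ (γ - 1) * Y * (B ^ ((γ + 1) / 2) * Y ^ ((1 - γ) / 2))) := by
          gcongr
      _ = 2 * β * ((Y ^ (γ - 1) * Y * Y ^ ((1 - γ) / 2)) * B ^ ((γ + 1) / 2)) := by ring
      _ = 2 * β * (Y ^ ((γ + 1) / 2) * B ^ ((γ + 1) / 2)) := by rw [hYcomb]
      _ = 2 * β * (Y * B) ^ ((γ + 1) / 2) := by
          rw [← Real.mul_rpow hY0 hB0]
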